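/- Let T be a finite tree, P \subseteq V(T) \times V(T) a set of terminal pairs, and let Q be a path in T such that no terminal pair path of P is contained in Q. Let T' = T / E(Q) be the tree obtained by contracting all edges of Q, let y^\circ be the vertex onto which Q is contracted, and let P' = P / E(Q) be the corresponding set of terminal pairs in T'. Then a set S \subseteq V(T) with S \cap V(Q) = \emptyset (which is naturally a subset of V(T') \setminus \{y^\circ\}) is a P-multicut in T if and only if it is a P'-multicut in T'. -/
import Mathlib


open SimpleGraph

section Defs

variable {V : Type*}

/-- `v` lies on every path from `a` to `b` in `G`; in a tree this says that `v`
lies on the unique `(a,b)`-path. -/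
def OnPath (G : SimpleGraph V) (a b v : V) : Prop :=
  ∀ p : G.Walk a b, p.IsPath → v ∈ p.support

/-- `u` belongs to the subtree `T_v` of the tree `G` rooted at `r`, i.e. `v` lies on
the unique `(r,u)`-path. -/
def InSubtree (G : SimpleGraph V) (r v u : V) : Prop :=
  OnPath G r u v

/-- The vertex set of the subtree `T_v` of the tree `G` rooted at `r`. -/
def SubtreeSet (G : SimpleGraph V) (r v : V) : Set V :=
  {u | InSubtree G r v u}

/-- `S` is a `P`-multicut in `G`: it meets every path between each terminal pair. -/
def IsMulticut (G : SimpleGraph V) (P : Set (V × V)) (S : Set V) : Prop :=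
  ∀ s t : V, (s, t) ∈ P → ∀ p : G.Walk s t, p.IsPath → ∃ v ∈ S, v ∈ p.support

/-- `S` is a `P`-multicut in the subgraph of `G` induced by `A`: it meets every
path staying inside `A` between each terminal pair with both ends in `A`. -/
def IsMulticutOn (G : SimpleGraph V) (A : Set V) (P : Set (V × V)) (S : Set V) : Prop :=
  ∀ s t : V, (s, t) ∈ P → s ∈ A → t ∈ A →
    ∀ p : G.Walk s t, p.IsPath → (∀ u ∈ p.support, u ∈ A) → ∃ v ∈ S, v ∈ p.support

/-- `w` is a least common ancestor of `u` and `v` in the tree `G` rooted at `r`: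
`u, v ∈ T_w` and `w` is furthest from `r` with this property. -/
def IsLCA (G : SimpleGraph V) (r u v w : V) : Prop :=
  InSubtree G r w u ∧ InSubtree G r w v ∧
    ∀ w' : V, InSubtree G r w' u → InSubtree G r w' v → G.dist r w' ≤ G.dist r w

/-- `X` is closed under taking least common ancestors. -/
def LCAClosed (G : SimpleGraph V) (r : V) (X : Set V) : Prop :=
  ∀ u ∈ X, ∀ v ∈ X, ∀ w : V, IsLCA G r u v w → w ∈ X

/-- The vertex set of `T^†_{v,x}` for a descendant `x` of `v`:
all vertices `u ≠ v` of `T_v` that either lie in `T_x` or whose path to `x`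
avoids `v`.  (For `v = x` this is `T_x \ {x}`.) -/
def TdagSet (G : SimpleGraph V) (r v x : V) : Set V :=
  {u | u ≠ v ∧ InSubtree G r v u ∧
    (InSubtree G r x u ∨ ∀ p : G.Walk u x, p.IsPath → v ∉ p.support)}

/-- `I[v]`: terminal pairs with both endpoints in `T_v` whose path passes through `v`. -/
def Ibr (G : SimpleGraph V) (r : V) (P : Set (V × V)) (v : V) : Set (V × V) :=
  {q | q ∈ P ∧ InSubtree G r v q.1 ∧ InSubtree G r v q.2 ∧ OnPath G q.1 q.2 v}

/-- `O[v]`: terminal pairs with exactly one endpoint in `T_v`. -/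
def Obr (G : SimpleGraph V) (r : V) (P : Set (V × V)) (v : V) : Set (V × V) :=
  {q | q ∈ P ∧ ((InSubtree G r v q.1 ∧ ¬ InSubtree G r v q.2) ∨
    (¬ InSubtree G r v q.1 ∧ InSubtree G r v q.2))}

end Defs

section Aux

variable {V V' : Type*} {T : SimpleGraph V} {T' : SimpleGraph V'}

/-- Push a walk forward along the contraction map. -/
lemma aux_pushWalk (ψ : V → V')
    (hpush : ∀ u v : V, T.Adj u v → ψ u ≠ ψ v → T'.Adj (ψ u) (ψ v)) :
    ∀ {a b : V} (p : T.Walk a b), ∃ w : T'.Walk (ψ a) (ψ b),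
      ∀ x ∈ w.support, ∃ u ∈ p.support, ψ u = x := by
  intro a b p
  induction p with
  | nil =>
    exact ⟨SimpleGraph.Walk.nil, by simp⟩
  | @cons a c b h p ih =>
    obtain ⟨w, hw⟩ := ih
    by_cases he : ψ a = ψ c
    · refine ⟨w.copy he.symm rfl, ?_⟩
      intro x hx
      rw [SimpleGraph.Walk.support_copy] at hx
      obtain ⟨u, hu, hux⟩ := hw x hx
      exact ⟨u, by simp [hu], hux⟩
    · refine ⟨SimpleGraph.Walk.cons (hpush a c h he) w, ?_⟩
      intro x hx
      rw [SimpleGraph.Walk.support_cons, List.mem_cons] at hx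
      rcases hx with rfl | hx
      · exact ⟨a, by simp, rfl⟩
      · obtain ⟨u, hu, hux⟩ := hw x hx
        exact ⟨u, by simp [hu], hux⟩

/-- Connect two vertices with the same image by a walk whose vertices all map
to that image. -/
lemma aux_connector {y x : V} (Q : T.Walk y x) (ψ : V → V') (y0 : V')
    (hψQ : ∀ u ∈ Q.support, ψ u = y0)
    (hψn : ∀ u : V, u ∉ Q.support → ψ u ≠ y0)
    (hψinj : ∀ u v : V, u ∉ Q.support → v ∉ Q.support → ψ u = ψ v → u = v)
    (s u : V) (h : ψ s = ψ u) :
    ∃ w : T.Walk s u, ∀ x ∈ w.support, ψ x = ψ s := by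
  classical
  by_cases hy : ψ s = y0
  · have hsQ : s ∈ Q.support := by
      by_contra hc; exact hψn s hc hy
    have huQ : u ∈ Q.support := by
      by_contra hc; exact hψn u hc (h ▸ hy)
    refine ⟨(Q.takeUntil s hsQ).reverse.append (Q.takeUntil u huQ), ?_⟩
    intro x hx
    rw [SimpleGraph.Walk.mem_support_append_iff] at hx
    have hxQ : x ∈ Q.support := by
      rcases hx with hx | hx
      · rw [SimpleGraph.Walk.support_reverse, List.mem_reverse] at hx
        exact SimpleGraph.Walk.support_takeUntil_subset _ _ hx
      · exact SimpleGraph.Walk.support_takeUntil_subset _ _ hx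
    rw [hψQ x hxQ, hy]
  · have hsQ : s ∉ Q.support := fun hc => hy (hψQ s hc)
    have huQ : u ∉ Q.support := fun hc => hy (h ▸ hψQ u hc)
    have : s = u := hψinj s u hsQ huQ h
    subst this
    exact ⟨SimpleGraph.Walk.nil, by simp⟩

/-- Lift a walk in the contracted tree to a walk in the original tree whose
vertices all map into the support of the original walk. -/
lemma aux_liftWalk {y x : V} (Q : T.Walk y x) (ψ : V → V') (y0 : V')
    (hψQ : ∀ u ∈ Q.support, ψ u = y0)
    (hψn : ∀ u : V, u ∉ Q.support → ψ u ≠ y0)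
    (hψinj : ∀ u v : V, u ∉ Q.support → v ∉ Q.support → ψ u = ψ v → u = v)
    (hadj : ∀ a b : V', T'.Adj a b → ∃ u v : V, T.Adj u v ∧ ψ u = a ∧ ψ v = b) :
    ∀ {a b : V'} (p' : T'.Walk a b) (s t : V), ψ s = a → ψ t = b →
      ∃ w : T.Walk s t, ∀ u ∈ w.support, ψ u ∈ p'.support := by
  classical
  intro a b p'
  induction p' with
  | nil =>
    intro s t hs ht
    obtain ⟨w, hw⟩ := aux_connector Q ψ y0 hψQ hψn hψinj s t (hs.trans ht.symm)
    exact ⟨w, fun u hu => by rw [hw u hu, hs]; simp⟩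
  | @cons a c b h q ih =>
    intro s t hs ht
    obtain ⟨u, v, huv, hu, hv⟩ := hadj a c h
    obtain ⟨w₂, hw₂⟩ := ih v t hv ht
    obtain ⟨w₁, hw₁⟩ := aux_connector Q ψ y0 hψQ hψn hψinj s u (hs.trans hu.symm)
    refine ⟨w₁.append (SimpleGraph.Walk.cons huv w₂), ?_⟩
    intro z hz
    rw [SimpleGraph.Walk.mem_support_append_iff] at hz
    rcases hz with hz | hz
    · rw [hw₁ z hz, hs]; simp
    · rw [SimpleGraph.Walk.support_cons, List.mem_cons] at hz
      rcases hz with rfl | hz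
      · rw [hu]; simp
      · have := hw₂ z hz
        simp only [SimpleGraph.Walk.support_cons, List.mem_cons]
        exact Or.inr this

/-- In a tree, a vertex on some path between `s` and `t` lies on every walk. -/
lemma aux_onWalk (hT : T.IsTree) {s t v : V} (p : T.Walk s t) (hp : p.IsPath)
    (hv : v ∈ p.support) (w : T.Walk s t) : v ∈ w.support := by
  classical
  have huniq := hT.existsUnique_path s t
  have h1 : p = w.bypass :=
    huniq.unique hp w.bypass_isPath
  exact SimpleGraph.Walk.support_bypass_subset w (h1 ▸ hv)

end Aux

/-- Contracting a path `Q` of a tree that contains no terminal pair path: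
a set `S` disjoint from `Q` is a `P`-multicut in `T` iff its image is a
`P/E(Q)`-multicut in `T/E(Q)`.  The contraction is modelled by a surjection
`ψ` sending exactly `V(Q)` to the contraction vertex `y0`, injective elsewhere,
with the adjacencies of the contracted graph. -/
theorem stmt_7 {V V' : Type*} [Fintype V] [Fintype V'] (T : SimpleGraph V)
    (hT : T.IsTree) (T' : SimpleGraph V') (hT' : T'.IsTree)
    (P : Set (V × V)) (y x : V) (Q : T.Walk y x) (hQ : Q.IsPath)
    (hnc : ∀ s t : V, (s, t) ∈ P → ∀ p : T.Walk s t, p.IsPath →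
      ¬ ∀ u ∈ p.support, u ∈ Q.support)
    (ψ : V → V') (y0 : V')
    (hψQ : ∀ u ∈ Q.support, ψ u = y0)
    (hψn : ∀ u : V, u ∉ Q.support → ψ u ≠ y0)
    (hψinj : ∀ u v : V, u ∉ Q.support → v ∉ Q.support → ψ u = ψ v → u = v)
    (hψsurj : Function.Surjective ψ)
    (hadj : ∀ a b : V', T'.Adj a b ↔ a ≠ b ∧ ∃ u v : V, T.Adj u v ∧ ψ u = a ∧ ψ v = b)
    (S : Set V) (hS : ∀ u ∈ S, u ∉ Q.support) :
    IsMulticut T P S ↔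
      IsMulticut T' {q : V' × V' | ∃ s t : V, (s, t) ∈ P ∧ q = (ψ s, ψ t)} (ψ '' S) := by
  classical
  constructor
  · -- forward direction
    intro hM s' t' hq p' hp'
    obtain ⟨s, t, hst, heq⟩ := hq
    obtain ⟨hs', ht'⟩ := Prod.mk.injEq .. ▸ heq
    -- get a path from s to t in T and a cut vertex on it
    obtain ⟨w0⟩ := hT.isConnected.preconnected s t
    obtain ⟨v, hvS, hvp⟩ := hM s t hst w0.bypass w0.bypass_isPath
    -- lift p' to a walk in T
    obtain ⟨w, hw⟩ := aux_liftWalk Q ψ y0 hψQ hψn hψinj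
      (fun a b h => ((hadj a b).1 h).2) p' s t hs'.symm ht'.symm
    have hvw : v ∈ w.support := aux_onWalk hT w0.bypass w0.bypass_isPath hvp w
    exact ⟨ψ v, ⟨v, hvS, rfl⟩, hw v hvw⟩
  · -- backward direction
    intro hM' s t hst p hp
    have hpush : ∀ u v : V, T.Adj u v → ψ u ≠ ψ v → T'.Adj (ψ u) (ψ v) :=
      fun u v h hne => (hadj (ψ u) (ψ v)).2 ⟨hne, u, v, h, rfl, rfl⟩
    obtain ⟨w, hw⟩ := aux_pushWalk ψ hpush p
    obtain ⟨v', hv'S, hv'p⟩ := hM' (ψ s) (ψ t) ⟨s, t, hst, rfl⟩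
      w.bypass w.bypass_isPath
    obtain ⟨v, hvS, rfl⟩ := hv'S
    obtain ⟨u, hup, huv⟩ := hw (ψ v) (SimpleGraph.Walk.support_bypass_subset w hv'p)
    have hvQ : v ∉ Q.support := hS v hvS
    have huQ : u ∉ Q.support := by
      intro hc
      exact hψn v hvQ (huv.symm.trans (hψQ u hc))
    have : u = v := hψinj u v huQ hvQ huv
    exact ⟨v, hvS, this ▸ hup⟩
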